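/- Let H be a complex Hilbert space, M ⊆ B(H) a von Neumann algebra, and τ a tracial state on M. Let (Mₙ) be a sequence of von Neumann subalgebras of M such that for each n there exists a state φₙ on B(H) with φₙ|_M = τ and φₙ(xT) = φₙ(Tx) for all x ∈ Mₙ, T ∈ B(H). Let M̃ ⊆ M be a von Neumann subalgebra such that every x ∈ M̃ is the ‖·‖_τ-limit of a sequence (xₙ) with xₙ ∈ Mₙ for all n. Then there exists a state φ on B(H) with φ|_M = τ and φ(xT) = φ(Tx) for all x ∈ M̃ and all T ∈ B(H). -/

import Mathlib

open scoped InnerProductSpace ComplexOrder ENNReal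
open ContinuousLinearMap

noncomputable section

/-- A group `G` is amenable if there is a left-translation-invariant state (invariant mean)
on the algebra `ℓ^∞(G)` of bounded complex functions on `G`. -/
def HasInvariantMean (G : Type*) [Group G] : Prop :=
  ∃ m : lp (fun _ : G => ℂ) ∞ →ₗ[ℂ] ℂ,
    m 1 = 1 ∧
    (∀ f : lp (fun _ : G => ℂ) ∞, 0 ≤ m (star f * f)) ∧
    ∀ (g : G) (f₁ f₂ : lp (fun _ : G => ℂ) ∞), (∀ x : G, f₂ x = f₁ (g * x)) → m f₂ = m f₁

variable {Γ : Type*} [Group Γ] [Countable Γ]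
variable {H : Type*} [NormedAddCommGroup H] [InnerProductSpace ℂ H] [CompleteSpace H]

/-- A state on `B(H)`: a positive linear functional taking the value `1` at the unit. -/
def IsStateB (φ : (H →L[ℂ] H) →ₗ[ℂ] ℂ) : Prop :=
  φ 1 = 1 ∧ ∀ T : H →L[ℂ] H, 0 ≤ φ (adjoint T * T)

/-- The group von Neumann algebra `L(Γ)`: the double commutant of the range of the left
regular representation `lam`. -/
def groupVN (lam : Γ → H →L[ℂ] H) : Set (H →L[ℂ] H) :=
  Set.centralizer (Set.centralizer (Set.range lam))

/-- For a subgroup `K ≤ Γ`, the von Neumann subalgebra `L(K)` of `L(Γ)` generated by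
`{lam h : h ∈ K}`, realized as the double commutant. -/
def subgroupVN (lam : Γ → H →L[ℂ] H) (K : Subgroup Γ) : Set (H →L[ℂ] H) :=
  Set.centralizer (Set.centralizer (lam '' (K : Set Γ)))

/-- The canonical trace `τ₀(x) = ⟨x δ_e, δ_e⟩` on `L(Γ)`, where `δ_e = b 1`. -/
def tau0 (b : HilbertBasis Γ ℂ H) : (H →L[ℂ] H) → ℂ :=
  fun x => ⟪(b 1 : H), x (b 1)⟫_ℂ

/-- An `(M, τ₀)`-hypertrace: a state `φ` on `B(ℓ²(Γ))` with `φ|_{L(Γ)} = τ₀` and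
`φ(mT) = φ(Tm)` for all `m ∈ M`, `T ∈ B(ℓ²(Γ))`. -/
def IsHypertrace (b : HilbertBasis Γ ℂ H) (lam : Γ → H →L[ℂ] H)
    (M : Set (H →L[ℂ] H)) (φ : (H →L[ℂ] H) →ₗ[ℂ] ℂ) : Prop :=
  IsStateB φ ∧ (∀ x ∈ groupVN lam, φ x = tau0 b x) ∧
    ∀ m ∈ M, ∀ T : H →L[ℂ] H, φ (m * T) = φ (T * m)



noncomputable section

variable {H : Type*} [NormedAddCommGroup H] [InnerProductSpace ℂ H] [CompleteSpace H]

lemma phi_real (φ : (H →L[ℂ] H) →ₗ[ℂ] ℂ)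
    (pos : ∀ T : H →L[ℂ] H, 0 ≤ φ (star T * T)) (T : H →L[ℂ] H) :
    (starRingEnd ℂ) (φ (star T * T)) = φ (star T * T) := by
  have h := (Complex.nonneg_iff.mp (pos T)).2
  rw [Complex.conj_eq_iff_im]
  exact h.symm

lemma phi_conj (φ : (H →L[ℂ] H) →ₗ[ℂ] ℂ)
    (pos : ∀ T : H →L[ℂ] H, 0 ≤ φ (star T * T)) (a b : H →L[ℂ] H) :
    (starRingEnd ℂ) (φ (star b * a)) = φ (star a * b) := by
  have hsym : ∀ x y : H →L[ℂ] H,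
      (starRingEnd ℂ) (φ (star y * x)) + (starRingEnd ℂ) (φ (star x * y))
        = φ (star y * x) + φ (star x * y) := by
    intro x y
    have hexp : star (x + y) * (x + y)
        = star x * x + (star y * x + star x * y) + star y * y := by
      simp only [star_add, add_mul, mul_add]
      abel
    have h := phi_real φ pos (x + y)
    rw [hexp] at h
    simp only [map_add, phi_real φ pos x, phi_real φ pos y] at h
    linear_combination h
  have c1 := hsym a b
  have e1 : φ (star (Complex.I • b) * a) = -Complex.I * (φ (star b * a)) := by
    rw [star_smul, smul_mul_assoc, map_smul]
    simp [Complex.conj_I]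
  have e2 : φ (star a * (Complex.I • b)) = Complex.I * (φ (star a * b)) := by
    rw [mul_smul_comm, map_smul, smul_eq_mul]
  have c2 := hsym a (Complex.I • b)
  rw [e1, e2] at c2
  simp only [map_mul, map_neg, Complex.conj_I, neg_neg, neg_mul] at c2
  have c2' : (starRingEnd ℂ) (φ (star b * a)) - (starRingEnd ℂ) (φ (star a * b))
      = -(φ (star b * a)) + φ (star a * b) :=
    mul_left_cancel₀ Complex.I_ne_zero (by linear_combination c2)
  linear_combination c1/2 + c2'/2

lemma phi_cs (φ : (H →L[ℂ] H) →ₗ[ℂ] ℂ)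
    (pos : ∀ T : H →L[ℂ] H, 0 ≤ φ (star T * T)) (a b : H →L[ℂ] H) :
    ‖φ (star a * b)‖ ^ 2 ≤ (φ (star a * a)).re * (φ (star b * b)).re := by
  letI core : PreInnerProductSpace.Core ℂ (H →L[ℂ] H) :=
    { inner := fun x y => φ (star x * y)
      conj_inner_symm := fun x y => phi_conj φ pos x y
      re_inner_nonneg := fun x => (Complex.nonneg_iff.mp (pos x)).1
      add_left := fun x y z => by simp only [star_add, add_mul, map_add]
      smul_left := fun x y r => by
        show φ (star (r • x) * y) = (starRingEnd ℂ) r * φ (star x * y)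
        rw [star_smul, smul_mul_assoc, map_smul, smul_eq_mul, Complex.star_def] }
  have h := InnerProductSpace.Core.inner_mul_inner_self_le (𝕜 := ℂ) (F := H →L[ℂ] H) a b
  have hba : φ (star b * a) = (starRingEnd ℂ) (φ (star a * b)) := by
    rw [← phi_conj φ pos b a]
  calc ‖φ (star a * b)‖ ^ 2 = ‖φ (star a * b)‖ * ‖φ (star b * a)‖ := by
        rw [hba, RCLike.norm_conj]; ring
    _ ≤ (φ (star a * a)).re * (φ (star b * b)).re := h

end

noncomputable section

variable {H : Type*} [NormedAddCommGroup H] [InnerProductSpace ℂ H] [CompleteSpace H]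

lemma phi_nonneg (φ : (H →L[ℂ] H) →ₗ[ℂ] ℂ)
    (pos : ∀ T : H →L[ℂ] H, 0 ≤ φ (star T * T)) {a : H →L[ℂ] H} (ha : 0 ≤ a) :
    0 ≤ φ a := by
  rw [StarOrderedRing.nonneg_iff] at ha
  induction ha using AddSubmonoid.closure_induction with
  | mem s hs => obtain ⟨t, rfl⟩ := hs; exact pos t
  | zero => simp
  | add x y _ _ hx hy => rw [map_add]; exact add_nonneg hx hy

lemma phi_re_le (φ : (H →L[ℂ] H) →ₗ[ℂ] ℂ)
    (pos : ∀ T : H →L[ℂ] H, 0 ≤ φ (star T * T)) (h1 : φ 1 = 1) (T : H →L[ℂ] H) :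
    (φ (star T * T)).re ≤ ‖T‖ ^ 2 := by
  have hle : star T * T ≤ algebraMap ℝ (H →L[ℂ] H) (‖T‖ ^ 2) :=
    CStarAlgebra.star_mul_le_algebraMap_norm_sq
  have h0 : 0 ≤ φ (algebraMap ℝ (H →L[ℂ] H) (‖T‖ ^ 2) - star T * T) :=
    phi_nonneg φ pos (sub_nonneg.2 hle)
  have halg : φ (algebraMap ℝ (H →L[ℂ] H) (‖T‖ ^ 2)) = ((‖T‖ ^ 2 : ℝ) : ℂ) := by
    rw [IsScalarTower.algebraMap_apply ℝ ℂ (H →L[ℂ] H), Algebra.algebraMap_eq_smul_one,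
      map_smul, h1, smul_eq_mul, mul_one, Complex.coe_algebraMap]
  rw [map_sub, halg] at h0
  have h2 := (Complex.nonneg_iff.mp h0).1
  simp only [Complex.sub_re, Complex.ofReal_re, sub_nonneg] at h2
  exact h2

lemma phi_norm_le (φ : (H →L[ℂ] H) →ₗ[ℂ] ℂ)
    (pos : ∀ T : H →L[ℂ] H, 0 ≤ φ (star T * T)) (h1 : φ 1 = 1) (T : H →L[ℂ] H) :
    ‖φ T‖ ≤ ‖T‖ := by
  have h := phi_cs φ pos 1 T
  simp only [star_one, one_mul, h1, Complex.one_re] at h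
  have h2 : ‖φ T‖ ^ 2 ≤ ‖T‖ ^ 2 := h.trans (by simpa using phi_re_le φ pos h1 T)
  exact le_of_pow_le_pow_left₀ two_ne_zero (norm_nonneg T) h2

end


/-- Let `M ⊆ B(H)` be a von Neumann algebra with a tracial state `τ`, and
`(Mₙ)` von Neumann subalgebras of `M` each admitting a state `φₙ` on `B(H)` with `φₙ|_M = τ`
which is `Mₙ`-central. If `M̃ ⊆ M` is a von Neumann subalgebra each of whose elements is a
`‖·‖_τ`-limit of a sequence `xₙ ∈ Mₙ`, then there is a state `φ` on `B(H)` with `φ|_M = τ`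
which is `M̃`-central. -/
theorem hypertrace_of_tau_norm_limit_algebra
    {H : Type*} [NormedAddCommGroup H] [InnerProductSpace ℂ H] [CompleteSpace H]
    (M : VonNeumannAlgebra H) (τ : (H →L[ℂ] H) → ℂ)
    (htracial : ∀ x ∈ M, ∀ y ∈ M, τ (x * y) = τ (y * x))
    (Mn : ℕ → VonNeumannAlgebra H) (hMn : ∀ n, (Mn n : Set (H →L[ℂ] H)) ⊆ M)
    (φn : ℕ → ((H →L[ℂ] H) →ₗ[ℂ] ℂ))
    (hφstate : ∀ n, IsStateB (φn n))
    (hφres : ∀ n, ∀ x ∈ M, φn n x = τ x)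
    (hφcentral : ∀ n, ∀ x ∈ Mn n, ∀ T : H →L[ℂ] H, φn n (x * T) = φn n (T * x))
    (Mt : VonNeumannAlgebra H) (hMt : (Mt : Set (H →L[ℂ] H)) ⊆ M)
    (happrox : ∀ x ∈ Mt, ∃ xs : ℕ → H →L[ℂ] H, (∀ n, xs n ∈ Mn n) ∧
      Filter.Tendsto (fun n => Real.sqrt (τ (adjoint (x - xs n) * (x - xs n))).re)
        Filter.atTop (nhds 0)) :
    ∃ φ : (H →L[ℂ] H) →ₗ[ℂ] ℂ, IsStateB φ ∧ (∀ x ∈ M, φ x = τ x) ∧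
      ∀ x ∈ Mt, ∀ T : H →L[ℂ] H, φ (x * T) = φ (T * x) := by
  classical
  have spos : ∀ n (T : H →L[ℂ] H), 0 ≤ φn n (star T * T) := fun n T => by
    rw [star_eq_adjoint]; exact (hφstate n).2 T
  have s1 : ∀ n, φn n 1 = 1 := fun n => (hφstate n).1
  set U : Ultrafilter ℕ := Ultrafilter.of Filter.atTop with hUdef
  have hU : (U : Filter ℕ) ≤ Filter.atTop := Ultrafilter.of_le _
  have hex : ∀ T : H →L[ℂ] H, ∃ z : ℂ,
      Filter.Tendsto (fun n => φn n T) (U : Filter ℕ) (nhds z) := by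
    intro T
    have hc : IsCompact (Metric.closedBall (0 : ℂ) ‖T‖) := isCompact_closedBall _ _
    have hmem : (↑(U.map fun n => φn n T) : Filter ℂ) ≤
        Filter.principal (Metric.closedBall (0 : ℂ) ‖T‖) := by
      rw [Filter.le_principal_iff]
      refine Filter.mem_map.2 (Filter.univ_mem' fun n => ?_)
      simpa [Metric.mem_closedBall, dist_zero_right] using
        phi_norm_le (φn n) (spos n) (s1 n) T
    obtain ⟨z, _, hz⟩ := hc.ultrafilter_le_nhds (U.map fun n => φn n T) hmem
    rw [Ultrafilter.coe_map] at hz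
    exact ⟨z, hz⟩
  choose L hL using hex
  have hadd : ∀ S T : H →L[ℂ] H, L (S + T) = L S + L T := fun S T =>
    tendsto_nhds_unique (hL (S + T))
      (by simpa only [map_add] using (hL S).add (hL T))
  have hsmul : ∀ (c : ℂ) (T : H →L[ℂ] H), L (c • T) = c * L T := fun c T =>
    tendsto_nhds_unique (hL (c • T))
      (by simpa only [map_smul, smul_eq_mul] using (hL T).const_mul c)
  refine ⟨{ toFun := L, map_add' := hadd,
            map_smul' := fun c T => by simpa using hsmul c T }, ⟨?_, ?_⟩, ?_, ?_⟩
  · show L 1 = 1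
    exact tendsto_nhds_unique (hL 1)
      ((tendsto_const_nhds).congr fun n => (s1 n).symm)
  · intro T
    show 0 ≤ L (adjoint T * T)
    have hcl : IsClosed {z : ℂ | 0 ≤ z} := by
      have : {z : ℂ | 0 ≤ z} = Complex.re ⁻¹' (Set.Ici 0) ∩ Complex.im ⁻¹' {0} := by
        ext z; simp [Complex.nonneg_iff, eq_comm]
      rw [this]
      exact (isClosed_Ici.preimage Complex.continuous_re).inter
        (isClosed_singleton.preimage Complex.continuous_im)
    exact hcl.mem_of_tendsto (hL (adjoint T * T))
      (Filter.Eventually.of_forall fun n => by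
        simpa [star_eq_adjoint] using spos n T)
  · intro x hx
    show L x = τ x
    exact tendsto_nhds_unique (hL x)
      ((tendsto_const_nhds).congr fun n => (hφres n x hx).symm)
  · intro x hxMt T
    show L (x * T) = L (T * x)
    obtain ⟨xs, hxs, hlim⟩ := happrox x hxMt
    have hxM : x ∈ M := hMt hxMt
    set ε : ℕ → ℝ := fun n => Real.sqrt (τ (adjoint (x - xs n) * (x - xs n))).re with hε
    have hbound : ∀ n, ‖φn n (x * T) - φn n (T * x)‖ ≤ 2 * ‖T‖ * ε n := by
      intro n
      set a : H →L[ℂ] H := x - xs n with ha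
      have haM : a ∈ M := sub_mem hxM (hMn n (hxs n))
      have hstaM : star a ∈ M := star_mem haM
      have hres1 : φn n (star a * a) = τ (star a * a) :=
        hφres n _ (mul_mem hstaM haM)
      have hres2 : φn n (a * star a) = τ (star a * a) := by
        rw [hφres n _ (mul_mem haM hstaM)]
        exact htracial a haM (star a) hstaM
      have hre_nonneg : 0 ≤ (τ (star a * a)).re := by
        rw [← hres1]; exact (Complex.nonneg_iff.mp (spos n a)).1
      have hε2 : ε n ^ 2 = (τ (star a * a)).re := by
        rw [hε]; simp only [← star_eq_adjoint]
        exact Real.sq_sqrt hre_nonneg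
      -- difference identity
      have hdiff : φn n (x * T) - φn n (T * x) = φn n (a * T) - φn n (T * a) := by
        have hc := hφcentral n (xs n) (hxs n) T
        rw [ha]
        simp only [sub_mul, mul_sub, map_sub]
        linear_combination hc
      -- term 1
      have ht1 : ‖φn n (a * T)‖ ≤ ε n * ‖T‖ := by
        have h := phi_cs (φn n) (spos n) (star a) T
        rw [star_star] at h
        have hTT := phi_re_le (φn n) (spos n) (s1 n) T
        have h2 : ‖φn n (a * T)‖ ^ 2 ≤ (ε n * ‖T‖) ^ 2 := by
          calc ‖φn n (a * T)‖ ^ 2 ≤ (φn n (a * star a)).re * (φn n (star T * T)).re := h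
            _ ≤ (ε n ^ 2) * ‖T‖ ^ 2 := by
                rw [hres2, ← hε2]
                exact mul_le_mul_of_nonneg_left hTT (by positivity)
            _ = (ε n * ‖T‖) ^ 2 := by ring
        exact le_of_pow_le_pow_left₀ two_ne_zero (by positivity) h2
      -- term 2
      have ht2 : ‖φn n (T * a)‖ ≤ ε n * ‖T‖ := by
        have h := phi_cs (φn n) (spos n) (star T) a
        rw [star_star] at h
        have hTT : (φn n (T * star T)).re ≤ ‖T‖ ^ 2 := by
          have := phi_re_le (φn n) (spos n) (s1 n) (star T)
          rwa [star_star, norm_star] at this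
        have h2 : ‖φn n (T * a)‖ ^ 2 ≤ (ε n * ‖T‖) ^ 2 := by
          calc ‖φn n (T * a)‖ ^ 2 ≤ (φn n (T * star T)).re * (φn n (star a * a)).re := h
            _ ≤ ‖T‖ ^ 2 * (ε n ^ 2) := by
                rw [hres1, ← hε2]
                exact mul_le_mul_of_nonneg_right hTT (by positivity)
            _ = (ε n * ‖T‖) ^ 2 := by ring
        exact le_of_pow_le_pow_left₀ two_ne_zero (by positivity) h2
      calc ‖φn n (x * T) - φn n (T * x)‖ = ‖φn n (a * T) - φn n (T * a)‖ := by rw [hdiff]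
        _ ≤ ‖φn n (a * T)‖ + ‖φn n (T * a)‖ := norm_sub_le _ _
        _ ≤ ε n * ‖T‖ + ε n * ‖T‖ := add_le_add ht1 ht2
        _ = 2 * ‖T‖ * ε n := by ring
    have hg : Filter.Tendsto (fun n => 2 * ‖T‖ * ε n) Filter.atTop (nhds 0) := by
      simpa only [mul_zero] using hlim.const_mul (2 * ‖T‖)
    have hD0 : Filter.Tendsto (fun n => φn n (x * T) - φn n (T * x))
        Filter.atTop (nhds 0) := squeeze_zero_norm hbound hg
    have hDU := hD0.mono_left hU
    have hD := (hL (x * T)).sub (hL (T * x))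
    have := tendsto_nhds_unique hD hDU
    exact sub_eq_zero.mp this


end
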